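/- Let Λ = Σ_{i=1}^r λ_i 1_{ζ_i} with λ_i ≠ 0 and ζ_i distinct points in K^n. Then the ideal I_Λ = ker H_Λ equals the vanishing ideal I(ζ_1,...,ζ_r) of the point set {ζ_1,...,ζ_r}, and in particular I_Λ is radical. -/
import Mathlib

open MvPolynomial

/-- The Hankel operator `H_Λ : p ↦ (q ↦ Λ(pq))`. -/
noncomputable def hankelOp (K : Type*) [Field K] (n : ℕ)
    (Λ : Module.Dual K (MvPolynomial (Fin n) K)) :
    MvPolynomial (Fin n) K →ₗ[K] Module.Dual K (MvPolynomial (Fin n) K) :=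
  (LinearMap.mul K (MvPolynomial (Fin n) K)).compr₂ Λ

/-- The kernel ideal `I_Λ = {p : ∀ q, Λ(pq) = 0}`. -/
def hankelIdeal (K : Type*) [Field K] (n : ℕ)
    (Λ : Module.Dual K (MvPolynomial (Fin n) K)) : Ideal (MvPolynomial (Fin n) K) where
  carrier := {p | ∀ q, Λ (p * q) = 0}
  add_mem' := by
    intro a b ha hb q
    rw [Set.mem_setOf_eq] at ha hb
    rw [add_mul, map_add, ha q, hb q, add_zero]
  zero_mem' := by
    intro q
    rw [zero_mul, map_zero]
  smul_mem' := by
    intro c p hp q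
    rw [Set.mem_setOf_eq] at hp
    have h : (c • p) * q = p * (c * q) := by rw [smul_eq_mul]; ring
    rw [h]
    exact hp _

/-- The evaluation functional `1_ζ : p ↦ p(ζ)`. -/
noncomputable def evalDual (K : Type*) [Field K] (n : ℕ) (ζ : Fin n → K) :
    Module.Dual K (MvPolynomial (Fin n) K) :=
  (MvPolynomial.aeval ζ).toLinearMap

/-- If `Λ = Σ λ_i 1_{ζ_i}` with nonzero weights and distinct points, then `I_Λ` is the
vanishing ideal of `{ζ_1, ..., ζ_r}`; in particular `I_Λ` is radical. -/
theorem hankel_kernel_eq_vanishing_ideal (K : Type*) [Field K] (n r : ℕ)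
    (Λ : Module.Dual K (MvPolynomial (Fin n) K))
    (lam : Fin r → K) (ζ : Fin r → (Fin n → K))
    (hlam : ∀ i, lam i ≠ 0) (hinj : Function.Injective ζ)
    (hΛ : Λ = ∑ i, lam i • evalDual K n (ζ i)) :
    (∀ p : MvPolynomial (Fin n) K,
        p ∈ hankelIdeal K n Λ ↔ ∀ i, MvPolynomial.eval (ζ i) p = 0) ∧
    (hankelIdeal K n Λ).IsRadical := by

  have hΛeval : ∀ f : MvPolynomial (Fin n) K, Λ f = ∑ i, lam i * MvPolynomial.eval (ζ i) f := by
    intro f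
    rw [hΛ]
    have he : ∀ (v : Fin n → K) (p : MvPolynomial (Fin n) K),
        MvPolynomial.aeval v p = MvPolynomial.eval v p := fun v p => by
      rw [← MvPolynomial.coe_aeval_eq_eval]; rfl
    simp [evalDual, smul_eq_mul, he]
  have key : ∀ i : Fin r, ∃ q : MvPolynomial (Fin n) K,
      MvPolynomial.eval (ζ i) q = 1 ∧ ∀ j, j ≠ i → MvPolynomial.eval (ζ j) q = 0 := by
    intro i
    have h1 : ∀ j : Fin r, j ≠ i → ∃ q : MvPolynomial (Fin n) K,
        MvPolynomial.eval (ζ i) q = 1 ∧ MvPolynomial.eval (ζ j) q = 0 := by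
      intro j hj
      have hne : ζ j ≠ ζ i := fun h => hj (hinj h)
      obtain ⟨k, hk⟩ := Function.ne_iff.mp hne
      refine ⟨MvPolynomial.C (ζ i k - ζ j k)⁻¹ * (MvPolynomial.X k - MvPolynomial.C (ζ j k)), ?_, ?_⟩
      · have : ζ i k - ζ j k ≠ 0 := sub_ne_zero.mpr (Ne.symm hk)
        simp [this]
      · simp
    choose qf hq1 hq0 using h1
    refine ⟨∏ j : Fin r, if h : j = i then 1 else qf j h, ?_, ?_⟩
    · rw [map_prod]
      apply Finset.prod_eq_one
      intro j _
      by_cases h : j = i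
      · simp [h]
      · simp [h, hq1 j h]
    · intro j hj
      rw [map_prod]
      apply Finset.prod_eq_zero (Finset.mem_univ j)
      simp [hj, hq0 j hj]
  have main : ∀ p : MvPolynomial (Fin n) K,
      p ∈ hankelIdeal K n Λ ↔ ∀ i, MvPolynomial.eval (ζ i) p = 0 := by
    intro p
    constructor
    · intro hp i
      obtain ⟨q, hq1, hq0⟩ := key i
      have h0 := hp q
      rw [hΛeval] at h0
      rw [Finset.sum_eq_single i] at h0
      · rw [map_mul, hq1, mul_one] at h0
        exact (mul_eq_zero.mp h0).resolve_left (hlam i)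
      · intro j _ hj
        rw [map_mul, hq0 j hj, mul_zero, mul_zero]
      · intro h; exact absurd (Finset.mem_univ i) h
    · intro hp q
      rw [hΛeval]
      apply Finset.sum_eq_zero
      intro i _
      rw [map_mul, hp i, zero_mul, mul_zero]
  refine ⟨main, ?_⟩
  intro p ⟨m, hm⟩
  rw [main] at hm ⊢
  intro i
  have := hm i
  rw [map_pow] at this
  exact (pow_eq_zero_iff'.mp this).1
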